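/- Let Q be a local probability weakly equivalent to P. The following are equivalent: (1) Q is countably additive, i.e., Q(⋃_k A_k) = Σ_k Q(A_k) for every sequence (A_k) of pairwise disjoint sets in F; (2) Q is strongly absolutely continuous with respect to P; (3) lim_{n→∞} Q(τ_n ≥ T) = 1 holds for every localizing sequence (τ_n) for Q; (4) lim_{n→∞} Q(τ_n ≥ T) = 1 holds for some localizing sequence (τ_n) for Q. -/

import Mathlib

open MeasureTheory Filter
open scoped NNReal

/-- A nondecreasing sequence of stopping times `τ` with `P (τ n ≥ T) → 1` which is
localizing for the finitely additive probability `Q`: on each `F_{τ n}` there is a countably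
additive measure agreeing with `Q` and mutually absolutely continuous with (the restriction
of) `P`. -/
def IsLocalizingSeqFor {Ω : Type*} {m : MeasurableSpace Ω} (P : Measure Ω)
    (ℱ : Filtration ℝ≥0 m) (T : Ω → ℝ≥0) (Q : Set Ω → ℝ) (τ : ℕ → Ω → ℝ≥0) : Prop :=
  (∀ n, τ n ≤ τ (n + 1)) ∧ (∀ n, IsStoppingTime ℱ (fun ω => (τ n ω : WithTop ℝ≥0))) ∧
    Tendsto (fun n => P {ω | T ω ≤ τ n ω}) atTop (nhds 1) ∧
    ∀ n, ∀ hn : IsStoppingTime ℱ (fun ω => (τ n ω : WithTop ℝ≥0)),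
      ∃ ν : @Measure Ω hn.measurableSpace,
        (∀ A : Set Ω, MeasurableSet[hn.measurableSpace] A → Q A = (ν A).toReal) ∧
        (∀ A : Set Ω, MeasurableSet[hn.measurableSpace] A → (ν A = 0 ↔ P A = 0))

lemma aux_eps_delta {Ω : Type*} {m0 : MeasurableSpace Ω} (μ ν : Measure Ω) [IsFiniteMeasure ν]
    (h : ∀ A, MeasurableSet A → μ A = 0 → ν A = 0) (ε : ℝ) (hε : 0 < ε) :
    ∃ δ : ℝ, 0 < δ ∧ ∀ E, MeasurableSet E → μ E < ENNReal.ofReal δ →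
      ν E < ENNReal.ofReal ε := by
  by_contra hc
  push_neg at hc
  choose E hEm hEμ hEν using fun k : ℕ => hc ((1/2 : ℝ)^k) (by positivity)
  set r : ENNReal := ENNReal.ofReal (1/2) with hr_def
  have hr1 : r < 1 := by
    rw [hr_def]
    exact ENNReal.ofReal_lt_one.mpr (by norm_num)
  have hofReal : ∀ k : ℕ, ENNReal.ofReal ((1/2 : ℝ)^k) = r ^ k := fun k =>
    ENNReal.ofReal_pow (by norm_num) k
  set S : ℕ → Set Ω := fun n => ⋃ k, E (n + k) with hS_def
  have hSm : ∀ n, MeasurableSet (S n) := fun n => MeasurableSet.iUnion fun k => hEm _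
  have hC_ne : (1 - r)⁻¹ ≠ ⊤ := by
    rw [Ne, ENNReal.inv_eq_top, tsub_eq_zero_iff_le]
    exact fun h' => absurd hr1 (not_lt.mpr h')
  have hμS : ∀ n, μ (S n) ≤ r ^ n * (1 - r)⁻¹ := by
    intro n
    calc μ (S n) ≤ ∑' k, μ (E (n + k)) := measure_iUnion_le _
      _ ≤ ∑' k, r ^ (n + k) := by
          refine ENNReal.tsum_le_tsum fun k => ?_
          refine le_trans (hEμ (n + k)).le ?_
          rw [hofReal]
      _ = r ^ n * (1 - r)⁻¹ := by
          simp only [pow_add, ENNReal.tsum_mul_left, ENNReal.tsum_geometric]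
  have hSanti : Antitone S := by
    refine antitone_nat_of_succ_le fun n => ?_
    intro ω hω
    obtain ⟨k, hk⟩ := Set.mem_iUnion.mp hω
    exact Set.mem_iUnion.mpr ⟨k + 1, by rwa [show n + (k+1) = n + 1 + k by omega]⟩
  have hμ_inter : μ (⋂ n, S n) = 0 := by
    have hten : Tendsto (fun n : ℕ => r ^ n * (1 - r)⁻¹) atTop (nhds (0 * (1 - r)⁻¹)) :=
      ENNReal.Tendsto.mul_const (ENNReal.tendsto_pow_atTop_nhds_zero_of_lt_one hr1)
        (Or.inr hC_ne)
    rw [zero_mul] at hten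
    have hle : μ (⋂ n, S n) ≤ 0 := by
      refine ge_of_tendsto' hten fun n => ?_
      exact le_trans (measure_mono (Set.iInter_subset _ n)) (hμS n)
    exact le_antisymm hle zero_le
  have hν_inter : ν (⋂ n, S n) = 0 := h _ (MeasurableSet.iInter hSm) hμ_inter
  have hν_ge : ENNReal.ofReal ε ≤ ν (⋂ n, S n) := by
    have hten := tendsto_measure_iInter_atTop (μ := ν)
      (fun n => (hSm n).nullMeasurableSet) hSanti ⟨0, measure_ne_top _ _⟩
    refine ge_of_tendsto' hten fun n => ?_
    refine le_trans (hEν n) (measure_mono ?_)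
    intro ω hω
    exact Set.mem_iUnion.mpr ⟨0, by simpa using hω⟩
  rw [hν_inter] at hν_ge
  simp only [nonpos_iff_eq_zero, ENNReal.ofReal_eq_zero] at hν_ge
  linarith

/-- For a local probability `Q` weakly equivalent to `P`, the following are
equivalent: (1) `Q` is countably additive; (2) `Q` is strongly absolutely continuous with
respect to `P`; (3) `Q (τ n ≥ T) → 1` for every localizing sequence for `Q`;
(4) `Q (τ n ≥ T) → 1` for some localizing sequence for `Q`. -/
theorem countably_additive_tfae
    {Ω : Type*} {m : MeasurableSpace Ω} (P : Measure Ω) [IsProbabilityMeasure P]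
    (ℱ : Filtration ℝ≥0 m)
    (T : Ω → ℝ≥0) (hT : IsStoppingTime ℱ (fun ω => (T ω : WithTop ℝ≥0)))
    (Q : Set Ω → ℝ)
    (hQ01 : ∀ A : Set Ω, MeasurableSet[hT.measurableSpace] A → 0 ≤ Q A ∧ Q A ≤ 1)
    (hQempty : Q ∅ = 0) (hQuniv : Q Set.univ = 1)
    (hQadd : ∀ A B : Set Ω, MeasurableSet[hT.measurableSpace] A →
      MeasurableSet[hT.measurableSpace] B → Disjoint A B → Q (A ∪ B) = Q A + Q B)
    (hQweak : ∀ A : Set Ω, MeasurableSet[hT.measurableSpace] A → P A = 0 → Q A = 0)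
    (hQloc : ∃ τ : ℕ → Ω → ℝ≥0, IsLocalizingSeqFor P ℱ T Q τ) :
    List.TFAE
      [∀ A : ℕ → Set Ω, (∀ k, MeasurableSet[hT.measurableSpace] (A k)) →
          Pairwise (Function.onFun Disjoint A) →
          HasSum (fun k => Q (A k)) (Q (⋃ k, A k)),
        ∀ ε : ℝ, 0 < ε → ∃ δ : ℝ, 0 < δ ∧ ∀ E : Set Ω,
          MeasurableSet[hT.measurableSpace] E → P E < ENNReal.ofReal δ → Q E < ε,
        ∀ τ : ℕ → Ω → ℝ≥0, IsLocalizingSeqFor P ℱ T Q τ →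
          Tendsto (fun n => Q {ω | T ω ≤ τ n ω}) atTop (nhds 1),
        ∃ τ : ℕ → Ω → ℝ≥0, IsLocalizingSeqFor P ℱ T Q τ ∧
          Tendsto (fun n => Q {ω | T ω ≤ τ n ω}) atTop (nhds 1)] := by
  -- finite additivity over ranges
  have hfin : ∀ (A : ℕ → Set Ω), (∀ k, MeasurableSet[hT.measurableSpace] (A k)) →
      Pairwise (Function.onFun Disjoint A) →
      ∀ n, Q (⋃ k ∈ Finset.range n, A k) = ∑ k ∈ Finset.range n, Q (A k) := by
    intro A hA hd n
    induction n with
    | zero => simpa using hQempty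
    | succ n ih =>
      rw [Finset.range_add_one, Finset.sum_insert (by simp), Finset.set_biUnion_insert]
      have hd2 : Disjoint (A n) (⋃ k ∈ Finset.range n, A k) := by
        refine Set.disjoint_left.mpr fun ω hω hω' => ?_
        obtain ⟨k, hk, hωk⟩ := Set.mem_iUnion₂.mp hω'
        exact Set.disjoint_left.mp
          (hd (show n ≠ k by have := Finset.mem_range.mp hk; omega)) hω hωk
      rw [hQadd _ _ (hA n) ((Finset.range n).measurableSet_biUnion (fun k _ => hA k)) hd2, ih]
  tfae_have 1 → 3
  · intro h1 τ hloc
    obtain ⟨hmono, hτ, hPtend, hν⟩ := hloc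
    set B : ℕ → Set Ω := fun n => {ω | T ω ≤ τ n ω} with hB_def
    have hB : ∀ n, MeasurableSet[hT.measurableSpace] (B n) := fun n => by
      have h := hT.measurableSet_le_stopping_time (hτ n)
      simp only [WithTop.coe_le_coe] at h; exact h
    have hBmono : Monotone B := by
      refine monotone_nat_of_le_succ fun n => ?_
      intro ω hω
      exact le_trans hω (hmono n ω)
    have hBu : MeasurableSet[hT.measurableSpace] (⋃ n, B n) := MeasurableSet.iUnion hB
    -- P (⋃ B) = 1
    have hPu : P (⋃ n, B n) = 1 :=
      tendsto_nhds_unique (tendsto_measure_iUnion_atTop hBmono) hPtend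
    have hPc : P ((⋃ n, B n)ᶜ) = 0 := by
      rw [measure_compl (hT.measurableSpace_le _ hBu) (measure_ne_top _ _), hPu,
        measure_univ, tsub_self]
    have hQu : Q (⋃ n, B n) = 1 := by
      have := hQadd _ _ hBu hBu.compl disjoint_compl_right
      rw [Set.union_compl_self, hQuniv, hQweak _ hBu.compl hPc, add_zero] at this
      exact this.symm
    -- disjointify
    have hC : ∀ k, MeasurableSet[hT.measurableSpace] (disjointed B k) :=
      MeasurableSet.disjointed hB
    have hsum := h1 (disjointed B) hC (disjoint_disjointed B)
    rw [iUnion_disjointed, hQu] at hsum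
    -- partial sums
    have hpart : ∀ n, ∑ k ∈ Finset.range (n + 1), Q (disjointed B k) = Q (B n) := by
      intro n
      induction n with
      | zero => simp [disjointed_zero]
      | succ n ih =>
        rw [Finset.sum_range_succ, ih, (by simpa [Order.succ_eq_add_one] using hBmono.disjointed_succ (not_isMax n) : disjointed B (n+1) = B (n+1) \ B n), ← hQadd _ _ (hB n)
          ((hB (n+1)).diff (hB n)) Set.disjoint_sdiff_right,
          Set.union_diff_cancel (hBmono (Nat.le_succ n))]
    have ht := (hsum.tendsto_sum_nat).comp (tendsto_add_atTop_nat 1)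
    exact ht.congr hpart
  tfae_have 3 → 4
  · intro h3
    obtain ⟨τ, hloc⟩ := hQloc
    exact ⟨τ, hloc, h3 τ hloc⟩
  tfae_have 4 → 2
  · rintro ⟨τ, ⟨hmono, hτ, hPtend, hν⟩, htend⟩ ε hε
    set B : ℕ → Set Ω := fun n => {ω | T ω ≤ τ n ω} with hB_def
    have hB : ∀ n, MeasurableSet[hT.measurableSpace] (B n) := fun n => by
      have h := hT.measurableSet_le_stopping_time (hτ n)
      simp only [WithTop.coe_le_coe] at h; exact h
    obtain ⟨n, hn⟩ := (htend.eventually (eventually_gt_nhds (by linarith : 1 - ε/2 < 1))).exists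
    obtain ⟨ν, hν1, hν2⟩ := hν n (hτ n)
    have hle : (hτ n).measurableSpace ≤ m := (hτ n).measurableSpace_le
    have huniv : (ν Set.univ).toReal = 1 := by
      rw [← hν1 Set.univ MeasurableSet.univ]; exact hQuniv
    have hν_fin : ν Set.univ ≠ ⊤ := by
      intro h'; rw [h'] at huniv; simp at huniv
    haveI : IsFiniteMeasure ν := ⟨lt_top_iff_ne_top.mpr hν_fin⟩
    have hac : ∀ A, MeasurableSet[(hτ n).measurableSpace] A →
        P.trim hle A = 0 → ν A = 0 := by
      intro A hA h'
      rw [trim_measurableSet_eq hle hA] at h'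
      exact (hν2 A hA).mpr h'
    obtain ⟨δ, hδpos, hδ⟩ := aux_eps_delta (P.trim hle) ν hac (ε/2) (by linarith)
    refine ⟨δ, hδpos, fun E hE hPE => ?_⟩
    -- split E
    have hEB : MeasurableSet[(hτ n).measurableSpace] (E ∩ B n) :=
      IsStoppingTime.measurableSpace_mono (hT.min (hτ n)) (hτ n)
        (fun ω => min_le_right _ _) _ (by have h := hT.measurableSet_inter_le (hτ n) E hE; simp only [WithTop.coe_le_coe] at h; exact h)
    have hνEB : ν (E ∩ B n) < ENNReal.ofReal (ε/2) := by
      refine hδ _ hEB ?_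
      rw [trim_measurableSet_eq hle hEB]
      exact lt_of_le_of_lt (measure_mono Set.inter_subset_left) hPE
    have hQEB : Q (E ∩ B n) < ε/2 := by
      rw [hν1 _ hEB]
      exact ENNReal.toReal_lt_of_lt_ofReal hνEB
    -- Q (E \ B n) ≤ Q (B n)ᶜ = 1 - Q (B n) < ε/2
    have hQBc : Q ((B n)ᶜ) = 1 - Q (B n) := by
      have := hQadd _ _ (hB n) (hB n).compl disjoint_compl_right
      rw [Set.union_compl_self, hQuniv] at this
      linarith
    have hQdiff : Q (E \ B n) ≤ Q ((B n)ᶜ) := by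
      have hunion : (E \ B n) ∪ ((B n)ᶜ \ E) = (B n)ᶜ := by
        ext ω
        simp only [Set.mem_union, Set.mem_diff, Set.mem_compl_iff]
        tauto
      have hdisj : Disjoint (E \ B n) ((B n)ᶜ \ E) :=
        Set.disjoint_left.mpr fun ω hω hω' => hω'.2 hω.1
      have := hQadd _ _ (hE.diff (hB n)) ((hB n).compl.diff hE) hdisj
      rw [hunion] at this
      have h0 := (hQ01 _ ((hB n).compl.diff hE)).1
      linarith
    have hsplit : Q E = Q (E ∩ B n) + Q (E \ B n) := by
      have hd : Disjoint (E ∩ B n) (E \ B n) :=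
        Set.disjoint_left.mpr fun ω hω hω' => hω'.2 hω.2
      have := hQadd _ _ (hE.inter (hB n)) (hE.diff (hB n)) hd
      rw [Set.inter_union_diff] at this
      exact this
    rw [hsplit]
    have : Q (E \ B n) < ε/2 := lt_of_le_of_lt hQdiff (by rw [hQBc]; linarith)
    linarith
  tfae_have 2 → 1
  · intro h2 A hA hd
    set U : Set Ω := ⋃ k, A k with hU_def
    have hU : MeasurableSet[hT.measurableSpace] U := MeasurableSet.iUnion hA
    set R : ℕ → Set Ω := fun n => ⋃ k, A (n + k) with hR_def
    have hRm : ∀ n, MeasurableSet[hT.measurableSpace] (R n) := fun n =>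
      MeasurableSet.iUnion fun k => hA _
    have hRanti : Antitone R := by
      refine antitone_nat_of_succ_le fun n => ?_
      intro ω hω
      obtain ⟨k, hk⟩ := Set.mem_iUnion.mp hω
      exact Set.mem_iUnion.mpr ⟨k + 1, by rwa [show n + (k+1) = n + 1 + k by omega]⟩
    have hRinter : ⋂ n, R n = ∅ := by
      rw [Set.eq_empty_iff_forall_notMem]
      intro ω hω
      obtain ⟨k0, hk0⟩ := Set.mem_iUnion.mp (Set.mem_iInter.mp hω 0)
      obtain ⟨j, hj⟩ := Set.mem_iUnion.mp (Set.mem_iInter.mp hω (k0 + 1))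
      exact Set.disjoint_left.mp (hd (show 0 + k0 ≠ k0 + 1 + j by omega)) hk0 hj
    have hPR : Tendsto (fun n => P (R n)) atTop (nhds 0) := by
      have := tendsto_measure_iInter_atTop (μ := P)
        (fun n => (hT.measurableSpace_le _ (hRm n)).nullMeasurableSet) hRanti
        ⟨0, measure_ne_top _ _⟩
      rw [hRinter, measure_empty] at this
      exact this
    have hQR : Tendsto (fun n => Q (R n)) atTop (nhds 0) := by
      rw [NormedAddCommGroup.tendsto_nhds_zero]
      intro ε hε
      obtain ⟨δ, hδpos, hδ⟩ := h2 ε hε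
      filter_upwards [hPR.eventually_lt_const (ENNReal.ofReal_pos.mpr hδpos)] with n hn
      rw [Real.norm_eq_abs, abs_of_nonneg (hQ01 _ (hRm n)).1]
      exact hδ _ (hRm n) hn
    have hsplit : ∀ n, Q U = (∑ k ∈ Finset.range n, Q (A k)) + Q (R n) := by
      intro n
      have hunion : (⋃ k ∈ Finset.range n, A k) ∪ R n = U := by
        apply Set.Subset.antisymm
        · rintro ω (hω | hω)
          · obtain ⟨k, _, hk⟩ := Set.mem_iUnion₂.mp hω
            exact Set.mem_iUnion.mpr ⟨k, hk⟩
          · obtain ⟨k, hk⟩ := Set.mem_iUnion.mp hω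
            exact Set.mem_iUnion.mpr ⟨n + k, hk⟩
        · intro ω hω
          obtain ⟨k, hk⟩ := Set.mem_iUnion.mp hω
          by_cases h' : k < n
          · exact Or.inl (Set.mem_iUnion₂.mpr ⟨k, Finset.mem_range.mpr h', hk⟩)
          · refine Or.inr (Set.mem_iUnion.mpr ⟨k - n, ?_⟩)
            rwa [show n + (k - n) = k by omega]
      have hdisj : Disjoint (⋃ k ∈ Finset.range n, A k) (R n) := by
        refine Set.disjoint_left.mpr fun ω hω hω' => ?_
        obtain ⟨k, hkn, hωk⟩ := Set.mem_iUnion₂.mp hω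
        obtain ⟨j, hωj⟩ := Set.mem_iUnion.mp hω'
        exact Set.disjoint_left.mp
          (hd (show k ≠ n + j by have := Finset.mem_range.mp hkn; omega)) hωk hωj
      calc Q U = Q ((⋃ k ∈ Finset.range n, A k) ∪ R n) := by rw [hunion]
        _ = Q (⋃ k ∈ Finset.range n, A k) + Q (R n) :=
            hQadd _ _ ((Finset.range n).measurableSet_biUnion (fun k _ => hA k)) (hRm n) hdisj
        _ = (∑ k ∈ Finset.range n, Q (A k)) + Q (R n) := by rw [hfin A hA hd n]
    have htend : Tendsto (fun n => ∑ k ∈ Finset.range n, Q (A k)) atTop (nhds (Q U)) := by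
      have h' : (fun n => ∑ k ∈ Finset.range n, Q (A k)) = fun n => Q U - Q (R n) :=
        funext fun n => by rw [hsplit n]; ring
      rw [h']
      simpa using tendsto_const_nhds.sub hQR
    exact (hasSum_iff_tendsto_nat_of_nonneg (fun k => (hQ01 _ (hA k)).1) _).mpr htend
  tfae_finish
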